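/- Let μₙ be a sequence of probability measures on ℝ^d and μ a probability measure on ℝ^d, with associated Gaussian location mixture densities fₙ and f. If the squared Hellinger distance H²(fₙ, f) → 0, then fₙ(x) → f(x) for every x ∈ ℝ^d. -/

import Mathlib

open MeasureTheory Real Filter

/-- The Gaussian location mixture density with mixing measure `μ` on `ℝ^d`. -/
noncomputable def gaussianMixture {d : ℕ} (μ : Measure (EuclideanSpace ℝ (Fin d)))
    (x : EuclideanSpace ℝ (Fin d)) : ℝ :=
  (2 * π) ^ (-(d : ℝ) / 2) * ∫ θ, Real.exp (-‖x - θ‖ ^ 2 / 2) ∂μ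

/-- The squared Hellinger distance between two densities on `ℝ^d`. -/
noncomputable def hellingerSq {d : ℕ} (f g : EuclideanSpace ℝ (Fin d) → ℝ) : ℝ :=
  ∫ x, (Real.sqrt (f x) - Real.sqrt (g x)) ^ 2

section Aux

variable {d : ℕ}

private lemma expsq_lip : LipschitzWith 1 (fun t : ℝ => Real.exp (-t ^ 2 / 2)) := by
  have hd : ∀ t : ℝ, HasDerivAt (fun t : ℝ => Real.exp (-t ^ 2 / 2))
      (Real.exp (-t ^ 2 / 2) * (-t)) t := by
    intro t
    have h1 : HasDerivAt (fun t : ℝ => -t ^ 2 / 2) (-t) t := by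
      have := ((hasDerivAt_pow 2 t).neg).div_const 2
      refine this.congr_deriv ?_
      push_cast; ring
    exact (Real.hasDerivAt_exp _).comp t h1
  apply lipschitzWith_of_nnnorm_deriv_le (fun t => (hd t).differentiableAt)
  intro t
  rw [(hd t).deriv, ← NNReal.coe_le_coe, coe_nnnorm, Real.norm_eq_abs]
  have h2 : |t| ≤ Real.exp (t ^ 2 / 2) := by
    have := Real.add_one_le_exp (t ^ 2 / 2)
    nlinarith [sq_abs t, sq_nonneg (|t| - 1)]
  have h3 : (0:ℝ) < Real.exp (-t ^ 2 / 2) := Real.exp_pos _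
  rw [abs_mul, abs_neg, abs_of_pos h3]
  calc Real.exp (-t ^ 2 / 2) * |t| ≤ Real.exp (-t ^ 2 / 2) * Real.exp (t ^ 2 / 2) :=
        mul_le_mul_of_nonneg_left h2 h3.le
    _ = 1 := by rw [← Real.exp_add]; ring_nf; exact Real.exp_zero

private lemma gauss_lip :
    LipschitzWith 1 (fun v : EuclideanSpace ℝ (Fin d) => Real.exp (-‖v‖ ^ 2 / 2)) := by
  have h := expsq_lip.comp (lipschitzWith_one_norm (E := EuclideanSpace ℝ (Fin d)))
  rw [mul_one] at h
  exact h

private lemma gauss_integrable :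
    Integrable (fun v : EuclideanSpace ℝ (Fin d) => Real.exp (-‖v‖ ^ 2 / 2)) := by
  have h := (GaussianFourier.integrable_cexp_neg_mul_sq_norm_add
    (V := EuclideanSpace ℝ (Fin d)) (b := (1/2 : ℂ)) (by norm_num) 0 0).norm
  apply h.congr
  filter_upwards with v
  rw [Complex.norm_exp]
  congr 1
  simp [← Complex.ofReal_pow]
  ring

private lemma kernel_cont (x : EuclideanSpace ℝ (Fin d)) :
    Continuous (fun θ : EuclideanSpace ℝ (Fin d) => Real.exp (-‖x - θ‖ ^ 2 / 2)) := by
  fun_prop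

private lemma kernel_le_one (v : EuclideanSpace ℝ (Fin d)) : Real.exp (-‖v‖ ^ 2 / 2) ≤ 1 := by
  rw [Real.exp_le_one_iff]
  have : (0:ℝ) ≤ ‖v‖ ^ 2 := by positivity
  linarith

private lemma kernel_integrable (μ : Measure (EuclideanSpace ℝ (Fin d))) [IsProbabilityMeasure μ]
    (x : EuclideanSpace ℝ (Fin d)) :
    Integrable (fun θ => Real.exp (-‖x - θ‖ ^ 2 / 2)) μ := by
  refine (integrable_const (1:ℝ)).mono' (kernel_cont x).aestronglyMeasurable ?_
  filter_upwards with θ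
  rw [Real.norm_eq_abs, abs_of_pos (Real.exp_pos _)]
  exact kernel_le_one _

private lemma normC_pos : (0:ℝ) < (2 * π) ^ (-(d : ℝ) / 2) :=
  Real.rpow_pos_of_pos (by positivity) _

private lemma gm_nonneg (μ : Measure (EuclideanSpace ℝ (Fin d))) [IsProbabilityMeasure μ]
    (x : EuclideanSpace ℝ (Fin d)) : 0 ≤ gaussianMixture μ x :=
  mul_nonneg normC_pos.le (integral_nonneg fun _ => (Real.exp_pos _).le)

private lemma gm_dist (μ : Measure (EuclideanSpace ℝ (Fin d))) [IsProbabilityMeasure μ]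
    (x y : EuclideanSpace ℝ (Fin d)) :
    |gaussianMixture μ x - gaussianMixture μ y| ≤ (2 * π) ^ (-(d : ℝ) / 2) * ‖x - y‖ := by
  unfold gaussianMixture
  rw [← mul_sub, abs_mul, abs_of_pos normC_pos]
  apply mul_le_mul_of_nonneg_left _ normC_pos.le
  rw [← integral_sub (kernel_integrable μ x) (kernel_integrable μ y)]
  calc |∫ θ, (Real.exp (-‖x - θ‖ ^ 2 / 2) - Real.exp (-‖y - θ‖ ^ 2 / 2)) ∂μ|
      ≤ ∫ θ, |Real.exp (-‖x - θ‖ ^ 2 / 2) - Real.exp (-‖y - θ‖ ^ 2 / 2)| ∂μ := by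
        simpa [Real.norm_eq_abs] using norm_integral_le_integral_norm
          (fun θ => Real.exp (-‖x - θ‖ ^ 2 / 2) - Real.exp (-‖y - θ‖ ^ 2 / 2)) (μ := μ)
    _ ≤ ∫ _θ, ‖x - y‖ ∂μ := by
        apply integral_mono ((kernel_integrable μ x).sub (kernel_integrable μ y)).abs
          (integrable_const _)
        intro θ
        have h := gauss_lip.dist_le_mul (x - θ) (y - θ)
        rw [Real.dist_eq] at h
        simpa [dist_eq_norm, sub_sub_sub_cancel_right] using h
    _ = ‖x - y‖ := by simp

private lemma gm_continuous (μ : Measure (EuclideanSpace ℝ (Fin d))) [IsProbabilityMeasure μ] :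
    Continuous (gaussianMixture μ) := by
  apply LipschitzWith.continuous (K := ⟨(2 * π) ^ (-(d : ℝ) / 2), normC_pos.le⟩)
  apply LipschitzWith.of_dist_le_mul
  intro x y
  rw [Real.dist_eq, dist_eq_norm]
  exact gm_dist μ x y

private lemma prod_integrable_aux (μ : Measure (EuclideanSpace ℝ (Fin d)))
    [IsProbabilityMeasure μ] :
    Integrable (fun p : EuclideanSpace ℝ (Fin d) × EuclideanSpace ℝ (Fin d) =>
      Real.exp (-‖p.2 - p.1‖ ^ 2 / 2)) (μ.prod volume) := by
  have hmeas : AEStronglyMeasurable (fun p : EuclideanSpace ℝ (Fin d) × EuclideanSpace ℝ (Fin d) =>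
      Real.exp (-‖p.2 - p.1‖ ^ 2 / 2)) (μ.prod volume) := by
    apply Continuous.aestronglyMeasurable; fun_prop
  rw [integrable_prod_iff hmeas]
  constructor
  · filter_upwards with θ
    exact gauss_integrable.comp_sub_right θ
  · apply (integrable_const (∫ v : EuclideanSpace ℝ (Fin d), Real.exp (-‖v‖ ^ 2 / 2))).congr
    filter_upwards with θ
    rw [eq_comm]
    calc ∫ x, ‖Real.exp (-‖x - θ‖ ^ 2 / 2)‖
        = ∫ x : EuclideanSpace ℝ (Fin d), Real.exp (-‖x - θ‖ ^ 2 / 2) := by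
          congr 1; ext x; rw [Real.norm_eq_abs, abs_of_pos (Real.exp_pos _)]
      _ = ∫ v : EuclideanSpace ℝ (Fin d), Real.exp (-‖v‖ ^ 2 / 2) :=
          integral_sub_right_eq_self (fun v => Real.exp (-‖v‖ ^ 2 / 2)) θ

private lemma prod_integrable (μ : Measure (EuclideanSpace ℝ (Fin d))) [IsProbabilityMeasure μ] :
    Integrable (fun p : EuclideanSpace ℝ (Fin d) × EuclideanSpace ℝ (Fin d) =>
      Real.exp (-‖p.1 - p.2‖ ^ 2 / 2)) (volume.prod μ) := by
  have := (prod_integrable_aux μ).swap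
  exact this

private lemma gm_integrable (μ : Measure (EuclideanSpace ℝ (Fin d))) [IsProbabilityMeasure μ] :
    Integrable (gaussianMixture μ) := by
  unfold gaussianMixture
  exact ((prod_integrable μ).integral_prod_left).const_mul _

/-- The common total mass of every Gaussian mixture density. -/
noncomputable def gmTotal (d : ℕ) : ℝ :=
  (2 * π) ^ (-(d : ℝ) / 2) * ∫ v : EuclideanSpace ℝ (Fin d), Real.exp (-‖v‖ ^ 2 / 2)

private lemma gmTotal_nonneg : 0 ≤ gmTotal d :=
  mul_nonneg normC_pos.le (integral_nonneg fun _ => (Real.exp_pos _).le)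

private lemma gm_integral (μ : Measure (EuclideanSpace ℝ (Fin d))) [IsProbabilityMeasure μ] :
    ∫ x, gaussianMixture μ x = gmTotal d := by
  unfold gaussianMixture gmTotal
  rw [integral_const_mul]
  congr 1
  have hswap := integral_integral_swap
    (f := fun θ x : EuclideanSpace ℝ (Fin d) => Real.exp (-‖x - θ‖ ^ 2 / 2))
    (μ := μ) (ν := volume) (prod_integrable_aux μ)
  rw [← hswap]
  have h : ∀ θ : EuclideanSpace ℝ (Fin d),
      (∫ x : EuclideanSpace ℝ (Fin d), Real.exp (-‖x - θ‖ ^ 2 / 2)) =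
      ∫ v : EuclideanSpace ℝ (Fin d), Real.exp (-‖v‖ ^ 2 / 2) :=
    fun θ => integral_sub_right_eq_self (fun v => Real.exp (-‖v‖ ^ 2 / 2)) θ
  simp_rw [h]
  simp

private lemma sqrt_cont (μ : Measure (EuclideanSpace ℝ (Fin d))) [IsProbabilityMeasure μ] :
    Continuous (fun y => Real.sqrt (gaussianMixture μ y)) :=
  Real.continuous_sqrt.comp (gm_continuous μ)

private lemma sq_sub_integrable (ν μ : Measure (EuclideanSpace ℝ (Fin d)))
    [IsProbabilityMeasure ν] [IsProbabilityMeasure μ] :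
    Integrable (fun y =>
      (Real.sqrt (gaussianMixture ν y) - Real.sqrt (gaussianMixture μ y)) ^ 2) := by
  refine Integrable.mono' (((gm_integrable ν).const_mul 2).add ((gm_integrable μ).const_mul 2))
    (((sqrt_cont ν).sub (sqrt_cont μ)).pow 2).aestronglyMeasurable ?_
  filter_upwards with y
  simp only [Pi.add_apply]
  rw [Real.norm_eq_abs, abs_of_nonneg (sq_nonneg _)]
  nlinarith [Real.sq_sqrt (gm_nonneg ν y), Real.sq_sqrt (gm_nonneg μ y),
    sq_nonneg (Real.sqrt (gaussianMixture ν y) + Real.sqrt (gaussianMixture μ y))]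

private lemma sq_add_integrable (ν μ : Measure (EuclideanSpace ℝ (Fin d)))
    [IsProbabilityMeasure ν] [IsProbabilityMeasure μ] :
    Integrable (fun y =>
      (Real.sqrt (gaussianMixture ν y) + Real.sqrt (gaussianMixture μ y)) ^ 2) := by
  refine Integrable.mono' (((gm_integrable ν).const_mul 2).add ((gm_integrable μ).const_mul 2))
    (((sqrt_cont ν).add (sqrt_cont μ)).pow 2).aestronglyMeasurable ?_
  filter_upwards with y
  simp only [Pi.add_apply]
  rw [Real.norm_eq_abs, abs_of_nonneg (sq_nonneg _)]
  nlinarith [Real.sq_sqrt (gm_nonneg ν y), Real.sq_sqrt (gm_nonneg μ y),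
    sq_nonneg (Real.sqrt (gaussianMixture ν y) - Real.sqrt (gaussianMixture μ y))]

private lemma sq_add_integral_le (ν μ : Measure (EuclideanSpace ℝ (Fin d)))
    [IsProbabilityMeasure ν] [IsProbabilityMeasure μ] :
    (∫ y, (Real.sqrt (gaussianMixture ν y) + Real.sqrt (gaussianMixture μ y)) ^ 2) ≤
      4 * gmTotal d := by
  calc (∫ y, (Real.sqrt (gaussianMixture ν y) + Real.sqrt (gaussianMixture μ y)) ^ 2)
      ≤ ∫ y, (2 * gaussianMixture ν y + 2 * gaussianMixture μ y) := by
        apply integral_mono (sq_add_integrable ν μ)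
          (((gm_integrable ν).const_mul 2).add ((gm_integrable μ).const_mul 2))
        intro y
        simp only [Pi.add_apply]
        nlinarith [Real.sq_sqrt (gm_nonneg ν y), Real.sq_sqrt (gm_nonneg μ y),
          sq_nonneg (Real.sqrt (gaussianMixture ν y) - Real.sqrt (gaussianMixture μ y))]
    _ = 4 * gmTotal d := by
        rw [integral_add ((gm_integrable ν).const_mul 2) ((gm_integrable μ).const_mul 2),
          integral_const_mul, integral_const_mul, gm_integral, gm_integral]
        ring

private lemma amgm_aux (a b t : ℝ) (ht : 0 < t) :
    2 * t * |a ^ 2 - b ^ 2| ≤ (a - b) ^ 2 + t ^ 2 * (a + b) ^ 2 := by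
  rcases abs_cases (a ^ 2 - b ^ 2) with ⟨h1, _⟩ | ⟨h1, _⟩ <;> rw [h1] <;>
    nlinarith [sq_nonneg ((a - b) - t * (a + b)), sq_nonneg ((a - b) + t * (a + b))]

/-- The key `L¹` bound: `2t‖fν - fμ‖₁ ≤ H² + 4t² ⋅ total mass`. -/
private lemma L1_bound (ν μ : Measure (EuclideanSpace ℝ (Fin d)))
    [IsProbabilityMeasure ν] [IsProbabilityMeasure μ] {t : ℝ} (ht : 0 < t) :
    2 * t * ∫ y, |gaussianMixture ν y - gaussianMixture μ y| ≤
      hellingerSq (gaussianMixture ν) (gaussianMixture μ) + t ^ 2 * (4 * gmTotal d) := by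
  have hI : Integrable (fun y => |gaussianMixture ν y - gaussianMixture μ y|) :=
    ((gm_integrable ν).sub (gm_integrable μ)).abs
  rw [← integral_const_mul]
  calc (∫ y, 2 * t * |gaussianMixture ν y - gaussianMixture μ y|)
      ≤ ∫ y, ((Real.sqrt (gaussianMixture ν y) - Real.sqrt (gaussianMixture μ y)) ^ 2 +
          t ^ 2 * (Real.sqrt (gaussianMixture ν y) + Real.sqrt (gaussianMixture μ y)) ^ 2) := by
        apply integral_mono (hI.const_mul _)
          ((sq_sub_integrable ν μ).add ((sq_add_integrable ν μ).const_mul _))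
        intro y
        simp only [Pi.add_apply]
        have h := amgm_aux (Real.sqrt (gaussianMixture ν y)) (Real.sqrt (gaussianMixture μ y)) t ht
        rw [Real.sq_sqrt (gm_nonneg ν y), Real.sq_sqrt (gm_nonneg μ y)] at h
        exact h
    _ = (∫ y, (Real.sqrt (gaussianMixture ν y) - Real.sqrt (gaussianMixture μ y)) ^ 2) +
          t ^ 2 * ∫ y, (Real.sqrt (gaussianMixture ν y) + Real.sqrt (gaussianMixture μ y)) ^ 2 := by
        rw [integral_add (sq_sub_integrable ν μ) ((sq_add_integrable ν μ).const_mul _),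
          integral_const_mul]
    _ ≤ hellingerSq (gaussianMixture ν) (gaussianMixture μ) + t ^ 2 * (4 * gmTotal d) := by
        unfold hellingerSq
        exact add_le_add_right (mul_le_mul_of_nonneg_left (sq_add_integral_le ν μ) (sq_nonneg t)) _

end Aux

/-- If the squared Hellinger distance between Gaussian mixtures `fₙ` and `f` tends to
zero, then `fₙ(x) → f(x)` for every `x`. -/
theorem gaussianMixture_tendsto_of_hellinger {d : ℕ}
    (μn : ℕ → Measure (EuclideanSpace ℝ (Fin d)))
    (μ : Measure (EuclideanSpace ℝ (Fin d)))
    [∀ n, IsProbabilityMeasure (μn n)] [IsProbabilityMeasure μ]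
    (h : Tendsto (fun n => hellingerSq (gaussianMixture (μn n)) (gaussianMixture μ))
      atTop (nhds 0)) :
    ∀ x, Tendsto (fun n => gaussianMixture (μn n) x) atTop
      (nhds (gaussianMixture μ x)) := by
  intro x
  set c : ℝ := (2 * π) ^ (-(d : ℝ) / 2) with hc
  have hcpos : (0:ℝ) < c := normC_pos
  set C : ℝ := gmTotal d with hCdef
  have hC0 : 0 ≤ C := gmTotal_nonneg
  rw [Metric.tendsto_atTop]
  intro ε hε
  set r : ℝ := ε / (4 * c) with hr
  have hrpos : 0 < r := by positivity
  set V : ℝ := (volume (Metric.ball x r)).toReal with hVdef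
  have hVpos : 0 < V := ENNReal.toReal_pos (Metric.measure_ball_pos volume x hrpos).ne'
    measure_ball_lt_top.ne
  set t : ℝ := ε * V / (8 * (C + 1)) with htdef
  have htpos : 0 < t := by positivity
  have hδ : 0 < t * V * ε / 2 := by positivity
  obtain ⟨N, hN⟩ := Metric.tendsto_atTop.mp h _ hδ
  refine ⟨N, fun n hn => ?_⟩
  have hNn := hN n hn
  rw [Real.dist_eq, sub_zero] at hNn
  set Hn : ℝ := hellingerSq (gaussianMixture (μn n)) (gaussianMixture μ) with hHn
  have hHlt : Hn < t * V * ε / 2 := lt_of_le_of_lt (le_abs_self _) hNn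
  set I : ℝ := ∫ y, |gaussianMixture (μn n) y - gaussianMixture μ y| with hIdef
  have hL1 : 2 * t * I ≤ Hn + t ^ 2 * (4 * C) := L1_bound (μn n) μ htpos
  set D : ℝ := |gaussianMixture (μn n) x - gaussianMixture μ x| with hDdef
  -- local-to-pointwise bound
  have hkey : ∀ y ∈ Metric.ball x r, D - 2 * c * r ≤
      |gaussianMixture (μn n) y - gaussianMixture μ y| := by
    intro y hy
    have hxy : ‖x - y‖ ≤ r := by
      rw [← dist_eq_norm]
      exact (Metric.mem_ball'.mp hy).le
    have h1 := gm_dist (μn n) x y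
    have h2 := gm_dist μ x y
    have h3 : D ≤ |gaussianMixture (μn n) x - gaussianMixture (μn n) y| +
        |gaussianMixture (μn n) y - gaussianMixture μ y| +
        |gaussianMixture μ y - gaussianMixture μ x| := by
      rw [hDdef]
      calc |gaussianMixture (μn n) x - gaussianMixture μ x|
          ≤ |gaussianMixture (μn n) x - gaussianMixture μ y| +
            |gaussianMixture μ y - gaussianMixture μ x| := abs_sub_le _ _ _
        _ ≤ |gaussianMixture (μn n) x - gaussianMixture (μn n) y| +
            |gaussianMixture (μn n) y - gaussianMixture μ y| +
            |gaussianMixture μ y - gaussianMixture μ x| := by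
            have := abs_sub_le (gaussianMixture (μn n) x) (gaussianMixture (μn n) y)
              (gaussianMixture μ y)
            linarith
    have h2' : |gaussianMixture μ y - gaussianMixture μ x| ≤ c * r := by
      rw [abs_sub_comm]
      calc |gaussianMixture μ x - gaussianMixture μ y| ≤ c * ‖x - y‖ := h2
        _ ≤ c * r := mul_le_mul_of_nonneg_left hxy hcpos.le
    have h1' : |gaussianMixture (μn n) x - gaussianMixture (μn n) y| ≤ c * r :=
      le_trans h1 (mul_le_mul_of_nonneg_left hxy hcpos.le)
    linarith
  have hIball : V * (D - 2 * c * r) ≤ I := by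
    have habs : Integrable (fun y => |gaussianMixture (μn n) y - gaussianMixture μ y|) :=
      ((gm_integrable (μn n)).sub (gm_integrable μ)).abs
    calc V * (D - 2 * c * r)
        = ∫ _y in Metric.ball x r, (D - 2 * c * r) := by
          rw [setIntegral_const, smul_eq_mul]; rfl
      _ ≤ ∫ y in Metric.ball x r, |gaussianMixture (μn n) y - gaussianMixture μ y| := by
          apply setIntegral_mono_on (integrableOn_const measure_ball_lt_top.ne)
            habs.integrableOn measurableSet_ball hkey
      _ ≤ I := by
          rw [hIdef]
          apply setIntegral_le_integral habs
          filter_upwards with y using abs_nonneg _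
  -- arithmetic
  have hcr : 2 * c * r = ε / 2 := by
    rw [hr]; field_simp; ring
  have h4 : t * (4 * C) ≤ ε * V / 2 := by
    rw [htdef, div_mul_eq_mul_div, div_le_div_iff₀ (by positivity) (by norm_num : (0:ℝ) < 2)]
    nlinarith [mul_pos hε hVpos]
  have h5 : t ^ 2 * (4 * C) ≤ t * (ε * V / 2) := by
    calc t ^ 2 * (4 * C) = t * (t * (4 * C)) := by ring
      _ ≤ t * (ε * V / 2) := mul_le_mul_of_nonneg_left h4 htpos.le
  have h6 : 2 * t * I < t * (V * ε) := by nlinarith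
  have h7 : I < V * ε / 2 := by nlinarith
  have h8 : V * D < V * ε := by
    rw [hcr] at hIball
    nlinarith
  have hD : D < ε := lt_of_mul_lt_mul_left h8 hVpos.le
  rw [Real.dist_eq]
  exact hD
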